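/- The function u(t,x) = √c · sech(k + √c·(x - c·t)) solves the modified KdV equation u_t + 6u²u_x + u_xxx = 0 with initial condition u(0,x) = √c·sech(k + √c·x). -/

import Mathlib

private lemma coshne (z : ℝ) : Real.cosh z ≠ 0 := (Real.cosh_pos z).ne'

private lemma hG1 (z : ℝ) : HasDerivAt (fun w => (Real.cosh w)⁻¹)
    (-Real.sinh z / Real.cosh z ^ 2) z :=
  (Real.hasDerivAt_cosh z).inv (coshne z)

private lemma hG2 (z : ℝ) : HasDerivAt (fun w => -Real.sinh w / Real.cosh w ^ 2)
    ((2 * Real.cosh z * Real.sinh z ^ 2 - Real.cosh z ^ 3) / Real.cosh z ^ 4) z := by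
  have h1 : HasDerivAt (fun w => -Real.sinh w) (-Real.cosh z) z := (Real.hasDerivAt_sinh z).neg
  have h2 : HasDerivAt (fun w : ℝ => Real.cosh w ^ 2)
      ((2 : ℕ) * Real.cosh z ^ (2 - 1) * Real.sinh z) z := (Real.hasDerivAt_cosh z).pow 2
  have h := h1.div h2 (pow_ne_zero 2 (coshne z))
  refine h.congr_deriv ?_
  have := coshne z
  rw [div_eq_div_iff (by positivity) (by positivity)]
  push_cast
  ring

private lemma hG3 (z : ℝ) : HasDerivAt
    (fun w => (2 * Real.cosh w * Real.sinh w ^ 2 - Real.cosh w ^ 3) / Real.cosh w ^ 4)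
    ((5 * Real.cosh z ^ 2 * Real.sinh z - 6 * Real.sinh z ^ 3) / Real.cosh z ^ 4) z := by
  have hs := Real.hasDerivAt_sinh z
  have hcc := Real.hasDerivAt_cosh z
  have hnum : HasDerivAt (fun w => 2 * Real.cosh w * Real.sinh w ^ 2 - Real.cosh w ^ 3)
      (2 * Real.sinh z * Real.sinh z ^ 2 + 2 * Real.cosh z * ((2:ℕ) * Real.sinh z ^ (2-1) * Real.cosh z)
        - (3:ℕ) * Real.cosh z ^ (3-1) * Real.sinh z) z := by
    exact (((hcc.const_mul 2).mul (hs.pow 2)).sub (hcc.pow 3))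
  have hden : HasDerivAt (fun w : ℝ => Real.cosh w ^ 4)
      ((4:ℕ) * Real.cosh z ^ (4-1) * Real.sinh z) z := hcc.pow 4
  have h := hnum.div hden (pow_ne_zero 4 (coshne z))
  refine h.congr_deriv ?_
  have := coshne z
  rw [div_eq_div_iff (by positivity) (by positivity)]
  push_cast
  ring

theorem stmt_14 (c k : ℝ) (hc : 0 ≤ c)
    (u : ℝ → ℝ → ℝ)
    (hu : ∀ t x, u t x = Real.sqrt c * (1 / Real.cosh (k + Real.sqrt c * (x - c * t)))) :
    (∀ t x : ℝ,
      deriv (fun s => u s x) t + 6 * (u t x) ^ 2 * deriv (fun y => u t y) x +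
        iteratedDeriv 3 (fun y => u t y) x = 0) ∧
    (∀ x : ℝ, u 0 x = Real.sqrt c * (1 / Real.cosh (k + Real.sqrt c * x))) := by
  set a := Real.sqrt c with hadef
  have ha : a ^ 2 = c := Real.sq_sqrt hc
  constructor
  · intro t x
    set z := k + a * (x - c * t) with hz
    set S := Real.sinh z
    set C := Real.cosh z
    have hCne : C ≠ 0 := coshne z
    have hid : C ^ 2 - S ^ 2 = 1 := Real.cosh_sq_sub_sinh_sq z
    -- time derivative
    have hzt : HasDerivAt (fun s : ℝ => k + a * (x - c * s)) (a * -(c * 1)) t := by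
      exact ((((hasDerivAt_id t).const_mul c).const_sub x).const_mul a).const_add k
    have hut : HasDerivAt (fun s => u s x) (a * (-S / C ^ 2 * (a * -(c * 1)))) t := by
      have h := ((hG1 z).comp t hzt).const_mul a
      simp only [hu]
      simpa [hz, one_div, Function.comp] using h
    -- space derivative of inner
    have hzx : ∀ y : ℝ, HasDerivAt (fun y : ℝ => k + a * (y - c * t)) (a * 1) y := by
      intro y
      simpa using (((hasDerivAt_id y).sub_const (c * t)).const_mul a).const_add k
    have f1 : ∀ y : ℝ, HasDerivAt (fun y => u t y)
        (a * (a * 1) * (-Real.sinh (k + a * (y - c * t)) / Real.cosh (k + a * (y - c * t)) ^ 2)) y := by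
      intro y
      have h := ((hG1 (k + a * (y - c * t))).comp y (hzx y)).const_mul a
      have h2 : HasDerivAt (fun y => u t y)
          (a * (-Real.sinh (k + a * (y - c * t)) / Real.cosh (k + a * (y - c * t)) ^ 2 * (a * 1))) y := by
        simp only [hu]
        simpa [one_div, Function.comp] using h
      convert h2 using 1; ring
    have hux : HasDerivAt (fun y => u t y) (a * (a * 1) * (-S / C ^ 2)) x := f1 x
    -- first deriv as a function
    have d1 : deriv (fun y => u t y) = fun y =>
        a * (a * 1) * (-Real.sinh (k + a * (y - c * t)) / Real.cosh (k + a * (y - c * t)) ^ 2) :=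
      funext fun y => (f1 y).deriv
    -- second deriv
    have f2 : ∀ y : ℝ, HasDerivAt (fun y =>
        a * (a * 1) * (-Real.sinh (k + a * (y - c * t)) / Real.cosh (k + a * (y - c * t)) ^ 2))
        (a * (a * 1) *
          ((2 * Real.cosh (k + a * (y - c * t)) * Real.sinh (k + a * (y - c * t)) ^ 2 -
            Real.cosh (k + a * (y - c * t)) ^ 3) / Real.cosh (k + a * (y - c * t)) ^ 4 * (a * 1))) y := by
      intro y
      have h := ((hG2 (k + a * (y - c * t))).comp y (hzx y)).const_mul (a * (a * 1))
      simpa [Function.comp] using h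
    have d2 : deriv (deriv (fun y => u t y)) = fun y =>
        a * (a * 1) *
          ((2 * Real.cosh (k + a * (y - c * t)) * Real.sinh (k + a * (y - c * t)) ^ 2 -
            Real.cosh (k + a * (y - c * t)) ^ 3) / Real.cosh (k + a * (y - c * t)) ^ 4 * (a * 1)) := by
      rw [d1]
      exact funext fun y => (f2 y).deriv
    -- third deriv at x
    have f3 : HasDerivAt (fun y =>
        a * (a * 1) *
          ((2 * Real.cosh (k + a * (y - c * t)) * Real.sinh (k + a * (y - c * t)) ^ 2 -
            Real.cosh (k + a * (y - c * t)) ^ 3) / Real.cosh (k + a * (y - c * t)) ^ 4 * (a * 1)))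
        (a * (a * 1) * ((5 * C ^ 2 * S - 6 * S ^ 3) / C ^ 4 * (a * 1) * (a * 1))) x := by
      have h := (((hG3 z).comp x (hzx x)).mul_const (a * 1)).const_mul (a * (a * 1))
      simpa [hz, Function.comp] using h
    have h3 : iteratedDeriv 3 (fun y => u t y) x =
        a * (a * 1) * ((5 * C ^ 2 * S - 6 * S ^ 3) / C ^ 4 * (a * 1) * (a * 1)) := by
      have e3 : iteratedDeriv 3 (fun y => u t y) = deriv (deriv (deriv (fun y => u t y))) := by
        rw [show (3:ℕ) = 2 + 1 from rfl, iteratedDeriv_succ, show (2:ℕ) = 1 + 1 from rfl,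
          iteratedDeriv_succ, iteratedDeriv_one]
      rw [e3, d2]
      exact f3.deriv
    rw [hut.deriv, hux.deriv, h3, hu t x]
    have hCC : Real.cosh (k + a * (x - c * t)) = C := rfl
    rw [hCC]
    field_simp
    linear_combination (-(a^2*S*C^2)) * ha + (6*a^4*S) * hid
  · intro x
    rw [hu 0 x]
    norm_num
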